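/- Let I ⊆ ℝ be an open bounded interval and f ∈ C^{m-1,1}(closure I), i.e., f is C^{m-1} with f^{(m-1)} Lipschitz on I. Then there is a constant C depending only on m such that for all t ∈ I and all k = 1, …, m: |f^{(k)}(t)| ≤ C |I|^{-k} ( ‖f‖_{L^∞(I)} + Lip_I(f^{(m-1)}) |I|^m ), where the inequality for k = m is understood pointwise wherever f^{(m)} exists (almost everywhere). -/

import Mathlib

open Set Finset

lemma coeffA (m : ℕ) (hm : 1 ≤ m) :
    ∃ C : ℝ, 0 < C ∧ ∀ (d : Fin m → ℝ) (M : ℝ),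
      (∀ i : Fin m, |∑ j : Fin m, d j * ((i : ℝ) / m) ^ (j : ℕ)| ≤ M) →
      ∀ j : Fin m, |d j| ≤ C * M := by
  have : NeZero m := ⟨by omega⟩
  set x : Fin m → ℝ := fun i => (i : ℝ) / m with hx
  set A : Matrix (Fin m) (Fin m) ℝ := Matrix.vandermonde x with hA
  have hdet : IsUnit A.det := by
    rw [hA, Matrix.det_vandermonde]
    refine (Finset.prod_ne_zero_iff.2 fun i _ => Finset.prod_ne_zero_iff.2 fun j hj => ?_).isUnit
    have hij : i < j := Finset.mem_Ioi.1 hj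
    have : (i : ℝ) < (j : ℝ) := by exact_mod_cast hij
    have hm' : (0 : ℝ) < m := by positivity
    have hxij : x i < x j := by
      rw [hx]; dsimp only; gcongr
    linarith [hxij]
  set B := A⁻¹ with hB
  refine ⟨(∑ j : Fin m, ∑ i : Fin m, |B j i|) + 1, by positivity, fun d M hval j => ?_⟩
  have hM : 0 ≤ M := le_trans (abs_nonneg _) (hval ⟨0, by omega⟩)
  have hd : d = B.mulVec (A.mulVec d) := by
    rw [hB, Matrix.mulVec_mulVec, Matrix.nonsing_inv_mul A hdet, Matrix.one_mulVec]
  have : |d j| ≤ (∑ i : Fin m, |B j i|) * M := by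
    conv_lhs => rw [hd]
    rw [Matrix.mulVec, dotProduct]
    calc |∑ i : Fin m, B j i * A.mulVec d i| ≤ ∑ i : Fin m, |B j i * A.mulVec d i| :=
          Finset.abs_sum_le_sum_abs _ _
      _ ≤ ∑ i : Fin m, |B j i| * M := by
          refine Finset.sum_le_sum fun i _ => ?_
          rw [abs_mul]
          refine mul_le_mul_of_nonneg_left ?_ (abs_nonneg _)
          have : A.mulVec d i = ∑ k : Fin m, d k * x i ^ (k : ℕ) := by
            rw [Matrix.mulVec, dotProduct]
            refine Finset.sum_congr rfl fun k _ => ?_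
            rw [hA]
            simp [Matrix.vandermonde]
            ring
          rw [this]; exact hval i
      _ = (∑ i : Fin m, |B j i|) * M := by rw [Finset.sum_mul]
  refine this.trans (mul_le_mul_of_nonneg_right ?_ hM)
  have h1 : ∑ i : Fin m, |B j i| ≤ ∑ j' : Fin m, ∑ i : Fin m, |B j' i| :=
    Finset.single_le_sum (f := fun j' => ∑ i : Fin m, |B j' i|)
      (fun _ _ => Finset.sum_nonneg fun _ _ => abs_nonneg _) (Finset.mem_univ j)
  linarith

lemma taylorB (n : ℕ) (a b : ℝ) (hab : a < b) (f : ℝ → ℝ) (L : NNReal)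
    (hf : ContDiffOn ℝ n f (Ioo a b))
    (hlip : LipschitzOnWith L (iteratedDerivWithin n f (Ioo a b)) (Ioo a b))
    (t : ℝ) (ht : t ∈ Ioo a b) :
    ∀ d j : ℕ, j + d = n → ∀ s ∈ Ioo a b,
      |iteratedDerivWithin j f (Ioo a b) s -
        ∑ i ∈ Finset.range (d + 1),
          iteratedDerivWithin (j + i) f (Ioo a b) t * (s - t) ^ i / (Nat.factorial i)|
        ≤ (L : ℝ) * (b - a) ^ (d + 1) := by
  have hI : Convex ℝ (Ioo a b) := convex_Ioo a b
  have hIo : IsOpen (Ioo a b) := isOpen_Ioo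
  have hb : ∀ s ∈ Ioo a b, ∀ t' ∈ Ioo a b, |s - t'| ≤ b - a := by
    intro s hs t' ht'
    rw [abs_le]; constructor <;> [nlinarith [hs.1, hs.2, ht'.1, ht'.2]; nlinarith [hs.1, hs.2, ht'.1, ht'.2]]
  intro d
  induction d with
  | zero =>
    intro j hj s hs
    have hj' : j = n := by omega
    subst hj'
    rw [show (0+1) = 1 from rfl, Finset.sum_range_one]
    simp only [Nat.add_zero, pow_zero, mul_one, Nat.factorial_zero, Nat.cast_one, div_one]
    calc |iteratedDerivWithin j f (Ioo a b) s - iteratedDerivWithin j f (Ioo a b) t|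
        ≤ (L : ℝ) * |s - t| := by
          have := hlip.dist_le_mul s hs t ht
          rwa [Real.dist_eq] at this
      _ ≤ (L : ℝ) * (b - a) ^ 1 := by
          rw [pow_one]
          exact mul_le_mul_of_nonneg_left (hb s hs t ht) L.2
  | succ d ih =>
    intro j hj s hs
    -- R_j has derivative R_{j+1} within Ioo a b
    set I := Ioo a b
    set R : ℕ → ℝ → ℝ := fun j' s' => iteratedDerivWithin j' f I s' -
      ∑ i ∈ Finset.range (n - j' + 1),
        iteratedDerivWithin (j' + i) f I t * (s' - t) ^ i / (Nat.factorial i) with hR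
    have hnj : n - j = d + 1 := by omega
    have hnj1 : n - (j+1) = d := by omega
    have hderiv : ∀ s' ∈ I, HasDerivWithinAt (R j) (R (j+1) s') I s' := by
      intro s' hs'
      have hdiff : HasDerivWithinAt (iteratedDerivWithin j f I)
          (iteratedDerivWithin (j+1) f I s') I s' := by
        have h1 : DifferentiableWithinAt ℝ (iteratedDerivWithin j f I) I s' := by
          refine (hf.differentiableOn_iteratedDerivWithin ?_ hIo.uniqueDiffOn) s' hs'
          exact_mod_cast (by omega : j < n)
        have h2 := h1.hasDerivWithinAt
        rwa [← iteratedDerivWithin_succ] at h2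
      have hpoly : HasDerivWithinAt
          (fun s'' => ∑ i ∈ Finset.range (n - j + 1),
            iteratedDerivWithin (j + i) f I t * (s'' - t) ^ i / (Nat.factorial i))
          (∑ i ∈ Finset.range (n - (j+1) + 1),
            iteratedDerivWithin (j + 1 + i) f I t * (s' - t) ^ i / (Nat.factorial i)) I s' := by
        have h3 : HasDerivWithinAt
            (fun s'' => ∑ i ∈ Finset.range (n - j + 1),
              iteratedDerivWithin (j + i) f I t * (s'' - t) ^ i / (Nat.factorial i))
            (∑ i ∈ Finset.range (n - j + 1),
              iteratedDerivWithin (j + i) f I t * (i * (s' - t) ^ (i - 1)) / (Nat.factorial i))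
            I s' := by
          refine HasDerivWithinAt.fun_sum fun i _ => ?_
          have : HasDerivWithinAt (fun s'' => (s'' - t) ^ i) (i * (s' - t) ^ (i - 1)) I s' := by
            simpa using ((hasDerivWithinAt_id s' I).sub_const t).fun_pow i
          simpa [mul_div_assoc, mul_assoc] using (this.const_mul (iteratedDerivWithin (j + i) f I t)).div_const (Nat.factorial i)
        convert h3 using 1
        rw [hnj, hnj1, Finset.sum_range_succ' (fun i => iteratedDerivWithin (j + i) f I t * (↑i * (s' - t) ^ (i - 1)) / ↑(Nat.factorial i)) (d+1)]
        simp only [Nat.cast_zero, zero_mul, mul_zero, zero_div, add_zero, pow_zero]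
        refine (Finset.sum_congr rfl fun i _ => ?_)
        have : (j + (i + 1)) = (j + 1 + i) := by omega
        rw [this]
        have hfac : (Nat.factorial (i+1) : ℝ) = (i+1) * Nat.factorial i := by
          rw [Nat.factorial_succ]; push_cast; ring
        rw [hfac, Nat.add_sub_cancel]
        have h5 : ((i:ℝ)+1) ≠ 0 := by positivity
        have h6 : (Nat.factorial i : ℝ) ≠ 0 := Nat.cast_ne_zero.2 (Nat.factorial_ne_zero i)
        field_simp
        push_cast
        ring
      exact hdiff.sub hpoly
    have hbound : ∀ s' ∈ I, ‖R (j+1) s'‖ ≤ (L : ℝ) * (b - a) ^ (d + 1) := by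
      intro s' hs'
      have := ih (j+1) (by omega) s' hs'
      rw [hR]
      simpa [hnj1, Real.norm_eq_abs] using this
    have hRt : R j t = 0 := by
      rw [hR]
      simp only [sub_self]
      rw [Finset.sum_eq_single 0]
      · simp
      · intro i _ hi
        rw [zero_pow hi]; ring
      · intro h; simp at h
    have := hI.norm_image_sub_le_of_norm_hasDerivWithin_le hderiv hbound ht hs
    rw [hRt, sub_zero] at this
    have hfin : |R j s| ≤ (L : ℝ) * (b - a) ^ (d + 1 + 1) := by
      calc |R j s| ≤ (L : ℝ) * (b - a) ^ (d + 1) * ‖s - t‖ := by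
            simpa [Real.norm_eq_abs] using this
        _ ≤ (L : ℝ) * (b - a) ^ (d + 1 + 1) := by
            have h1 : ‖s - t‖ ≤ b - a := by simpa [Real.norm_eq_abs] using hb s hs t ht
            have h2 : (0:ℝ) ≤ (b - a) ^ (d+1) := pow_nonneg (sub_pos.2 hab).le _
            have h3 : (0:ℝ) ≤ (L:ℝ) := L.2
            calc (L:ℝ) * (b - a) ^ (d+1) * ‖s - t‖
                ≤ (L:ℝ) * (b - a) ^ (d+1) * (b - a) :=
                  mul_le_mul_of_nonneg_left h1 (mul_nonneg h3 h2)
              _ = (L:ℝ) * (b - a) ^ (d+1+1) := by ring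
    rw [hR] at hfin
    simpa [hnj] using hfin

theorem stmt2 (m : ℕ) (hm : 1 ≤ m) :
    ∃ C : ℝ, 0 < C ∧
      ∀ (a b : ℝ), a < b → ∀ f : ℝ → ℝ, ∀ L : NNReal,
        ContDiffOn ℝ (m - 1 : ℕ) f (Ioo a b) →
        LipschitzOnWith L (iteratedDerivWithin (m - 1) f (Ioo a b)) (Ioo a b) →
        (∀ t ∈ Ioo a b, ∀ k : ℕ, 1 ≤ k → k ≤ m - 1 →
          |iteratedDerivWithin k f (Ioo a b) t| ≤
            C * (b - a) ^ (-(k : ℤ)) *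
              ((⨆ s ∈ Ioo a b, |f s|) + (L : ℝ) * (b - a) ^ m)) ∧
        (∀ t ∈ Ioo a b, ∀ g : ℝ,
          HasDerivWithinAt (iteratedDerivWithin (m - 1) f (Ioo a b)) g (Ioo a b) t →
          |g| ≤ C * (b - a) ^ (-(m : ℤ)) *
              ((⨆ s ∈ Ioo a b, |f s|) + (L : ℝ) * (b - a) ^ m)) := by
  obtain ⟨C0, hC0, hA⟩ := coeffA m hm
  refine ⟨(m.factorial : ℝ) * 4 ^ m * C0 + 1, by positivity, ?_⟩
  intro a b hab f L hf hlip
  set C : ℝ := (m.factorial : ℝ) * 4 ^ m * C0 + 1 with hCdef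
  have hh : (0 : ℝ) < b - a := sub_pos.2 hab
  have hC1 : 1 ≤ C := by
    have : (0:ℝ) ≤ (m.factorial : ℝ) * 4 ^ m * C0 := by positivity
    rw [hCdef]; linarith
  have hCpos : 0 < C := by linarith
  have hSnn : (0:ℝ) ≤ ⨆ s ∈ Ioo a b, |f s| :=
    Real.iSup_nonneg fun s => Real.iSup_nonneg fun _ => abs_nonneg _
  have hMnn : (0:ℝ) ≤ (⨆ s ∈ Ioo a b, |f s|) + (L : ℝ) * (b - a) ^ m := by
    have : (0:ℝ) ≤ (L : ℝ) * (b - a) ^ m := mul_nonneg L.2 (pow_nonneg hh.le m)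
    linarith
  constructor
  · -- intermediate derivatives
    intro t ht k hk1 hk2
    have hm2 : 2 ≤ m := by omega
    have hT := taylorB (m - 1) a b hab f L hf hlip t ht (m - 1) 0 (by omega)
    rw [show m - 1 + 1 = m from by omega] at hT
    simp only [zero_add, iteratedDerivWithin_zero] at hT
    have hdist : ∀ s ∈ Ioo a b, |s - t| ≤ b - a := by
      intro s hs
      rw [abs_le]
      constructor
      · nlinarith [hs.1, hs.2, ht.1, ht.2]
      · nlinarith [hs.1, hs.2, ht.1, ht.2]
    -- boundedness of f on the interval
    set Bd : ℝ := (∑ i ∈ Finset.range m,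
        |iteratedDerivWithin i f (Ioo a b) t| * (b - a) ^ i / (Nat.factorial i)) +
        (L : ℝ) * (b - a) ^ m with hBddef
    have hfb : ∀ s ∈ Ioo a b, |f s| ≤ Bd := by
      intro s hs
      have h1 := hT s hs
      have h2 : |∑ i ∈ Finset.range m,
          iteratedDerivWithin i f (Ioo a b) t * (s - t) ^ i / (Nat.factorial i)| ≤
          ∑ i ∈ Finset.range m,
          |iteratedDerivWithin i f (Ioo a b) t| * (b - a) ^ i / (Nat.factorial i) := by
        refine (Finset.abs_sum_le_sum_abs _ _).trans (Finset.sum_le_sum fun i _ => ?_)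
        rw [abs_div, abs_mul, abs_pow, Nat.abs_cast]
        refine div_le_div_of_nonneg_right ?_ (by positivity)
        exact mul_le_mul_of_nonneg_left
          (pow_le_pow_left₀ (abs_nonneg _) (hdist s hs) i) (abs_nonneg _)
      have h3 := abs_sub_abs_le_abs_sub (f s)
        (∑ i ∈ Finset.range m, iteratedDerivWithin i f (Ioo a b) t * (s - t) ^ i / (Nat.factorial i))
      rw [hBddef]
      linarith [abs_nonneg (f s)]
    have hbdd : BddAbove (Set.range fun s => ⨆ (_ : s ∈ Ioo a b), |f s|) := by
      refine ⟨max Bd 0, ?_⟩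
      rintro y ⟨s, rfl⟩
      exact Real.iSup_le (fun hs => le_max_of_le_left (hfb s hs)) (le_max_right _ _)
    have hS : ∀ y ∈ Ioo a b, |f y| ≤ ⨆ s ∈ Ioo a b, |f s| := by
      intro y hy
      have h1 : (⨆ (_ : y ∈ Ioo a b), |f y|) = |f y| := ciSup_pos hy
      rw [← h1]
      exact le_ciSup hbdd y
    -- choice of direction
    obtain ⟨σ, hσ, hyI⟩ : ∃ σ : ℝ, |σ| = 1 ∧
        ∀ u ∈ Icc (0:ℝ) 1, t + σ * ((b - a) / 4 * u) ∈ Ioo a b := by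
      rcases le_or_gt (b - t) ((b - a) / 2) with hcase | hcase
      · refine ⟨-1, by norm_num, fun u hu => ?_⟩
        have hq1 : (0:ℝ) ≤ (b - a) / 4 * u := by
          have := hu.1; positivity
        have hq2 : (0:ℝ) ≤ (b - a) / 4 * (1 - u) := by
          have h := hu.2; nlinarith [hu.2]
        constructor
        · nlinarith [ht.1, ht.2]
        · nlinarith [ht.1, ht.2]
      · refine ⟨1, by norm_num, fun u hu => ?_⟩
        have hq1 : (0:ℝ) ≤ (b - a) / 4 * u := by
          have := hu.1; positivity
        have hq2 : (0:ℝ) ≤ (b - a) / 4 * (1 - u) := by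
          nlinarith [hu.2]
        constructor
        · nlinarith [ht.1, ht.2]
        · nlinarith [ht.1, ht.2]
    set M : ℝ := (⨆ s ∈ Ioo a b, |f s|) + (L : ℝ) * (b - a) ^ m with hMdef
    set d : Fin m → ℝ := fun j =>
      iteratedDerivWithin (j : ℕ) f (Ioo a b) t / (Nat.factorial (j : ℕ)) *
        (σ * ((b - a) / 4)) ^ (j : ℕ) with hddef
    have hval : ∀ i : Fin m, |∑ j : Fin m, d j * (((i : ℕ) : ℝ) / m) ^ (j : ℕ)| ≤ M := by
      intro i
      set u : ℝ := ((i : ℕ) : ℝ) / m with hudef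
      have hu : u ∈ Icc (0:ℝ) 1 := by
        constructor
        · rw [hudef]; positivity
        · rw [hudef, div_le_one (by positivity : (0:ℝ) < (m:ℝ))]
          exact_mod_cast (i.2).le
      have hy := hyI u hu
      set y : ℝ := t + σ * ((b - a) / 4 * u) with hydef
      have hyt : y - t = σ * ((b - a) / 4) * u := by rw [hydef]; ring
      have key : ∑ j : Fin m, d j * u ^ (j : ℕ) =
          ∑ j ∈ Finset.range m,
            iteratedDerivWithin j f (Ioo a b) t * (y - t) ^ j / (Nat.factorial j) := by
        rw [Fin.sum_univ_eq_sum_range (fun j =>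
          iteratedDerivWithin j f (Ioo a b) t / (Nat.factorial j) *
            (σ * ((b - a) / 4)) ^ j * u ^ j) m]
        refine Finset.sum_congr rfl fun j _ => ?_
        rw [hyt, mul_pow (σ * ((b - a) / 4)) u j]
        ring
      rw [key]
      have h7 := hT y hy
      have h8 := hS y hy
      set P : ℝ := ∑ j ∈ Finset.range m,
        iteratedDerivWithin j f (Ioo a b) t * (y - t) ^ j / (Nat.factorial j) with hPdef
      have h9 : |P| = |f y - (f y - P)| := by congr 1; ring
      calc |P| = |f y - (f y - P)| := h9
        _ ≤ |f y| + |f y - P| := by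
            have := abs_sub (f y) (f y - P)
            exact this
        _ ≤ (⨆ s ∈ Ioo a b, |f s|) + (L : ℝ) * (b - a) ^ m := add_le_add h8 h7
        _ = M := by rw [hMdef]
    have hdk := hA d M hval ⟨k, by omega⟩
    have habs : |d ⟨k, by omega⟩| =
        |iteratedDerivWithin k f (Ioo a b) t| / (Nat.factorial k) * ((b - a) / 4) ^ k := by
      rw [hddef]
      simp only [Fin.val_mk]
      rw [abs_mul, abs_div, abs_pow, abs_mul, hσ, one_mul, Nat.abs_cast,
        abs_of_pos (by linarith : (0:ℝ) < (b - a) / 4)]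
    rw [habs] at hdk
    -- final arithmetic
    rw [zpow_neg, zpow_natCast,
      show C * ((b - a) ^ k)⁻¹ * ((⨆ s ∈ Ioo a b, |f s|) + (L : ℝ) * (b - a) ^ m) =
        C * M / (b - a) ^ k from by rw [hMdef]; ring,
      le_div_iff₀ (pow_pos hh k)]
    rw [div_pow, div_mul_div_comm, div_le_iff₀ (by positivity)] at hdk
    have hmono : ((Nat.factorial k : ℝ) * 4 ^ k) ≤ (Nat.factorial m : ℝ) * 4 ^ m := by
      have h1 : (Nat.factorial k : ℝ) ≤ Nat.factorial m :=
        Nat.cast_le.2 (Nat.factorial_le (by omega))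
      have h2 : (4:ℝ) ^ k ≤ 4 ^ m := pow_le_pow_right₀ (by norm_num) (by omega)
      exact mul_le_mul h1 h2 (by positivity) (by positivity)
    have hMnn' : 0 ≤ M := hMnn
    calc |iteratedDerivWithin k f (Ioo a b) t| * (b - a) ^ k
        ≤ C0 * M * ((Nat.factorial k : ℝ) * 4 ^ k) := hdk
      _ ≤ C0 * M * ((Nat.factorial m : ℝ) * 4 ^ m) :=
          mul_le_mul_of_nonneg_left hmono (mul_nonneg hC0.le hMnn')
      _ ≤ C * M := by
          rw [hCdef, show ((m.factorial : ℝ) * 4 ^ m * C0 + 1) * M =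
            C0 * M * ((Nat.factorial m : ℝ) * 4 ^ m) + M from by ring]
          linarith
  · -- top derivative
    intro t ht g hg
    have hgL : |g| ≤ (L : ℝ) := by
      have hne : (nhdsWithin t (Ioo a b \ {t})).NeBot := by
        refine mem_closure_iff_nhdsWithin_neBot.1 ?_
        have hsub : Ioo t b ⊆ Ioo a b \ {t} := fun y hy =>
          ⟨⟨lt_trans ht.1 hy.1, hy.2⟩, ne_of_gt hy.1⟩
        have htc : t ∈ closure (Ioo t b) := by
          rw [closure_Ioo (ne_of_lt ht.2)]
          exact ⟨le_refl t, ht.2.le⟩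
        exact closure_mono hsub htc
      have hg' := hasDerivWithinAt_iff_tendsto_slope.1 hg
      refine le_of_tendsto hg'.abs ?_
      filter_upwards [self_mem_nhdsWithin] with s hs
      rcases hs with ⟨hsI, hst⟩
      have hst' : s ≠ t := by simpa using hst
      rw [slope_def_field, abs_div, div_le_iff₀ (abs_pos.2 (sub_ne_zero.2 hst'))]
      have := hlip.dist_le_mul s hsI t ht
      rw [Real.dist_eq, Real.dist_eq] at this
      exact this
    rw [zpow_neg, zpow_natCast]
    have hP : (0:ℝ) < (b - a) ^ m := pow_pos hh m
    have heq : C * ((b - a) ^ m)⁻¹ * ((⨆ s ∈ Ioo a b, |f s|) + (L : ℝ) * (b - a) ^ m) =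
        C * (⨆ s ∈ Ioo a b, |f s|) / (b - a) ^ m + C * L := by
      field_simp
    rw [heq]
    have h1 : (L : ℝ) ≤ C * L := le_mul_of_one_le_left L.2 hC1
    have h2 : 0 ≤ C * (⨆ s ∈ Ioo a b, |f s|) / (b - a) ^ m :=
      div_nonneg (mul_nonneg hCpos.le hSnn) hP.le
    calc |g| ≤ (L : ℝ) := hgL
      _ ≤ C * L := h1
      _ ≤ C * (⨆ s ∈ Ioo a b, |f s|) / (b - a) ^ m + C * L := le_add_of_nonneg_left h2
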